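/- In the polynomial ring R = ℚ[x11, x22, x21, x12, x23, x13, x14, x24], the ideal I generated by x11*x22 − x21*x12, x12*x23 − x22*x13, and x13*x24 − x23*x14 equals the intersection Q1 ∩ Q2 ∩ Q3, where Q1 is the ideal generated by the six 2×2 minors x23*x14 − x13*x24, x21*x14 − x11*x24, x22*x14 − x12*x24, x12*x23 − x22*x13, x11*x23 − x21*x13, x11*x22 − x21*x12; Q2 is the ideal generated by x13, x23, x11*x22 − x21*x12; and Q3 is the ideal generated by x12, x22, x23*x14 − x13*x24. -/

import Mathlib

open MvPolynomial

noncomputable section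

abbrev R : Type := MvPolynomial (Fin 8) ℚ

def x11 : R := X 0
def x22 : R := X 1
def x21 : R := X 2
def x12 : R := X 3
def x23 : R := X 4
def x13 : R := X 5
def x14 : R := X 6
def x24 : R := X 7

def I : Ideal R :=
  Ideal.span {x11 * x22 - x21 * x12, x12 * x23 - x22 * x13, x13 * x24 - x23 * x14}

def Q1 : Ideal R :=
  Ideal.span {x23 * x14 - x13 * x24, x21 * x14 - x11 * x24, x22 * x14 - x12 * x24,
    x12 * x23 - x22 * x13, x11 * x23 - x21 * x13, x11 * x22 - x21 * x12}

def Q2 : Ideal R := Ideal.span {x13, x23, x11 * x22 - x21 * x12}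

def Q3 : Ideal R := Ideal.span {x12, x22, x23 * x14 - x13 * x24}

namespace PD

abbrev T : Type := MvPolynomial (Fin 6) ℚ

abbrev e8 (i : Fin 8) : Fin 8 →₀ ℕ := Finsupp.single i 1

def Lv : Fin 4 → Fin 8 := fun c => match c with | 0 => 0 | 1 => 3 | 2 => 5 | 3 => 6
def Uv : Fin 4 → Fin 8 := fun c => match c with | 0 => 2 | 1 => 1 | 2 => 4 | 3 => 7
def colv : Fin 4 → Fin 6 := fun c => match c with | 0 => 2 | 1 => 3 | 2 => 4 | 3 => 5
def rowIdx : Fin 8 → Fin 6 := fun i => match i with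
  | 0 => 0 | 1 => 1 | 2 => 1 | 3 => 0 | 4 => 1 | 5 => 0 | 6 => 0 | 7 => 1
def colIdx : Fin 8 → Fin 6 := fun i => match i with
  | 0 => 2 | 1 => 3 | 2 => 2 | 3 => 3 | 4 => 4 | 5 => 4 | 6 => 5 | 7 => 5

def eT : Fin 8 → (Fin 6 →₀ ℕ) := fun i => Finsupp.single (rowIdx i) 1 + Finsupp.single (colIdx i) 1

def Φ : R →ₐ[ℚ] T := aeval (fun i => monomial (eT i) 1)

lemma eT_L (c : Fin 4) : eT (Lv c) = Finsupp.single 0 1 + Finsupp.single (colv c) 1 := by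
  fin_cases c <;> rfl

lemma eT_U (c : Fin 4) : eT (Uv c) = Finsupp.single 1 1 + Finsupp.single (colv c) 1 := by
  fin_cases c <;> rfl

def hatf (n : Fin 8 →₀ ℕ) : Fin 6 → ℕ := fun j => match j with
  | 0 => n 0 + n 3 + n 5 + n 6
  | 1 => n 1 + n 2 + n 4 + n 7
  | 2 => n 0 + n 2
  | 3 => n 1 + n 3
  | 4 => n 4 + n 5
  | 5 => n 6 + n 7

def hatΦ (n : Fin 8 →₀ ℕ) : Fin 6 →₀ ℕ := Finsupp.equivFunOnFinite.symm (hatf n)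

lemma hatΦ_apply (n : Fin 8 →₀ ℕ) (j : Fin 6) : hatΦ n j = hatf n j := rfl

lemma Xe (i : Fin 8) : (X i : R) = monomial (e8 i) 1 := rfl

lemma XmulX (i j : Fin 8) : (X i : R) * X j = monomial (e8 i + e8 j) 1 := by
  rw [Xe, Xe, monomial_mul, one_mul]

lemma Φ_X (i : Fin 8) : Φ (X i) = monomial (eT i) 1 := by
  rw [Φ, aeval_X]

lemma Φ_monomial (n : Fin 8 →₀ ℕ) (q : ℚ) : Φ (monomial n q) = monomial (hatΦ n) q := by
  rw [Φ, aeval_monomial]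
  rw [Finsupp.prod_fintype _ _ (fun i => pow_zero _)]
  simp only [monomial_pow, one_pow]
  rw [Fin.prod_univ_eight]
  simp only [monomial_mul, one_mul, mul_one]
  rw [show (algebraMap ℚ T) q = C q from rfl, C_mul_monomial, mul_one]
  rw [monomial_eq_monomial_iff]
  left
  refine ⟨?_, rfl⟩
  apply Finsupp.ext
  intro j
  fin_cases j <;>
    simp [hatΦ_apply, hatf, eT, rowIdx, colIdx, Finsupp.add_apply, Finsupp.smul_apply,
      Finsupp.single_apply] <;> ring

-- chunk 2
-- chunk 2
lemma coeff_Φ (x : R) (d : Fin 6 →₀ ℕ) :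
    coeff d (Φ x) = ∑ n ∈ x.support.filter (fun n => hatΦ n = d), coeff n x := by
  conv_lhs => rw [x.as_sum]
  rw [map_sum, coeff_sum]
  simp_rw [Φ_monomial, coeff_monomial]
  rw [Finset.sum_filter]

lemma coeff_Φ_single {x : R} {n₀ : Fin 8 →₀ ℕ} (hn₀ : n₀ ∈ x.support)
    (huniq : ∀ n ∈ x.support, hatΦ n = hatΦ n₀ → n = n₀) :
    coeff (hatΦ n₀) (Φ x) = coeff n₀ x := by
  rw [coeff_Φ]
  refine Finset.sum_eq_single n₀ ?_ ?_
  · intro b hb hbn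
    exact absurd (huniq b (Finset.mem_filter.mp hb).1 (Finset.mem_filter.mp hb).2) hbn
  · intro h
    exact absurd (Finset.mem_filter.mpr ⟨hn₀, rfl⟩ : n₀ ∈ Finset.filter (fun n => hatΦ n = hatΦ n₀) x.support) h

lemma supp_row2 {x : R} (h : ∀ d ∈ (Φ x).support, d 1 ≠ 0) :
    ∀ n ∈ x.support, ∃ c : Fin 4, n (Uv c) ≠ 0 := by
  intro n hn
  by_contra hc
  push_neg at hc
  have h2 : n 2 = 0 := hc 0
  have h1 : n 1 = 0 := hc 1
  have h4 : n 4 = 0 := hc 2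
  have h7 : n 7 = 0 := hc 3
  have huniq : ∀ m ∈ x.support, hatΦ m = hatΦ n → m = n := by
    intro m hm he
    have E : ∀ j, hatf m j = hatf n j := fun j => by
      rw [← hatΦ_apply, ← hatΦ_apply, he]
    have E0 := E 0; have E1 := E 1; have E2 := E 2
    have E3 := E 3; have E4 := E 4; have E5 := E 5
    simp only [hatf] at E0 E1 E2 E3 E4 E5
    ext i
    fin_cases i <;> simp <;> omega
  have hco := coeff_Φ_single hn huniq
  have hd1 : (hatΦ n) 1 = 0 := by rw [hatΦ_apply]; simp only [hatf]; omega
  have hmem : hatΦ n ∈ (Φ x).support := by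
    rw [mem_support_iff, hco]; exact mem_support_iff.mp hn
  exact (h _ hmem) hd1

lemma supp_row1 {x : R} (h : ∀ d ∈ (Φ x).support, d 0 ≠ 0) :
    ∀ n ∈ x.support, ∃ c : Fin 4, n (Lv c) ≠ 0 := by
  intro n hn
  by_contra hc
  push_neg at hc
  have h0 : n 0 = 0 := hc 0
  have h3 : n 3 = 0 := hc 1
  have h5 : n 5 = 0 := hc 2
  have h6 : n 6 = 0 := hc 3
  have huniq : ∀ m ∈ x.support, hatΦ m = hatΦ n → m = n := by
    intro m hm he
    have E : ∀ j, hatf m j = hatf n j := fun j => by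
      rw [← hatΦ_apply, ← hatΦ_apply, he]
    have E0 := E 0; have E1 := E 1; have E2 := E 2
    have E3 := E 3; have E4 := E 4; have E5 := E 5
    simp only [hatf] at E0 E1 E2 E3 E4 E5
    ext i
    fin_cases i <;> simp <;> omega
  have hco := coeff_Φ_single hn huniq
  have hd0 : (hatΦ n) 0 = 0 := by rw [hatΦ_apply]; simp only [hatf]; omega
  have hmem : hatΦ n ∈ (Φ x).support := by
    rw [mem_support_iff, hco]; exact mem_support_iff.mp hn
  exact (h _ hmem) hd0

def Canon (n : Fin 8 →₀ ℕ) : Prop :=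
  ∀ c c' : Fin 4, c < c' → n (Uv c) = 0 ∨ n (Lv c') = 0

lemma canon_formula {n : Fin 8 →₀ ℕ} (hn : Canon n) :
    n 0 = min (n 0 + n 2) (n 0 + n 3 + n 5 + n 6) ∧
    n 3 = min (n 1 + n 3) ((n 0 + n 3 + n 5 + n 6) - (n 0 + n 2)) ∧
    n 5 = min (n 4 + n 5) ((n 0 + n 3 + n 5 + n 6) - (n 0 + n 2) - (n 1 + n 3)) ∧
    n 6 = min (n 6 + n 7) ((n 0 + n 3 + n 5 + n 6) - (n 0 + n 2) - (n 1 + n 3) - (n 4 + n 5)) := by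
  have hn01 : n 2 = 0 ∨ n 3 = 0 := hn 0 1 (by decide)
  have hn02 : n 2 = 0 ∨ n 5 = 0 := hn 0 2 (by decide)
  have hn03 : n 2 = 0 ∨ n 6 = 0 := hn 0 3 (by decide)
  have hn12 : n 1 = 0 ∨ n 5 = 0 := hn 1 2 (by decide)
  have hn13 : n 1 = 0 ∨ n 6 = 0 := hn 1 3 (by decide)
  have hn23 : n 4 = 0 ∨ n 6 = 0 := hn 2 3 (by decide)
  refine ⟨?_, ?_, ?_, ?_⟩ <;> omega

lemma canon_inj {n m : Fin 8 →₀ ℕ} (hn : Canon n) (hm : Canon m) (he : hatΦ n = hatΦ m) :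
    n = m := by
  have E : ∀ j, hatf n j = hatf m j := fun j => by
    rw [← hatΦ_apply, ← hatΦ_apply, he]
  have E0 := E 0; have E1 := E 1; have E2 := E 2
  have E3 := E 3; have E4 := E 4; have E5 := E 5
  simp only [hatf] at E0 E1 E2 E3 E4 E5
  obtain ⟨F0, F1, F2, F3⟩ := canon_formula hn
  obtain ⟨G0, G1, G2, G3⟩ := canon_formula hm
  have h0 : n 0 = m 0 := by rw [F0, G0, E2, E0]
  have h3 : n 3 = m 3 := by rw [F1, G1, E3, E2, E0]
  have h5 : n 5 = m 5 := by rw [F2, G2, E4, E3, E2, E0]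
  have h6 : n 6 = m 6 := by rw [F3, G3, E5, E4, E3, E2, E0]
  ext i
  fin_cases i <;> simp <;> omega

lemma zero_of_canon {x : R} (hc : ∀ n ∈ x.support, Canon n) (h0 : Φ x = 0) : x = 0 := by
  by_contra hx
  obtain ⟨n₀, hn₀⟩ := Finset.nonempty_iff_ne_empty.mpr
    (fun hemp => hx (support_eq_empty.mp hemp))
  have hco := coeff_Φ_single hn₀ (fun n hn he => canon_inj (hc n hn) (hc n₀ hn₀) he)
  rw [h0, coeff_zero] at hco
  exact mem_support_iff.mp hn₀ hco.symm
-- chunk 3 : certificates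
def II : Ideal R :=
  Ideal.span {X 0 * X 1 - X 2 * X 3, X 3 * X 4 - X 1 * X 5, X 5 * X 7 - X 4 * X 6}

lemma memI {p : R} (A B C' : R)
    (h : p = A * (X 0 * X 1 - X 2 * X 3) + B * (X 3 * X 4 - X 1 * X 5)
      + C' * (X 5 * X 7 - X 4 * X 6)) : p ∈ II := by
  rw [h]
  refine Ideal.add_mem _ (Ideal.add_mem _ ?_ ?_) ?_ <;>
    exact Ideal.mul_mem_left _ _ (Ideal.subset_span (by simp))

lemma cert_t (c : Fin 4) : X (Uv c) * (X 3 * X 5) - X (Lv c) * (X 3 * X 4) ∈ II := by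
  fin_cases c
  · exact memI (-X 5) (-X 0) 0 (by simp only [Uv, Lv]; ring)
  · exact memI 0 (-X 3) 0 (by simp only [Uv, Lv]; ring)
  · exact memI 0 0 0 (by simp only [Uv, Lv]; ring)
  · exact memI 0 0 (X 3) (by simp only [Uv, Lv]; ring)

lemma cert_s (c : Fin 4) : X (Lv c) * (X 1 * X 4) - X (Uv c) * (X 3 * X 4) ∈ II := by
  fin_cases c
  · exact memI (X 4) 0 0 (by simp only [Uv, Lv]; ring)
  · exact memI 0 0 0 (by simp only [Uv, Lv]; ring)
  · exact memI 0 (-X 4) 0 (by simp only [Uv, Lv]; ring)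
  · exact memI 0 (-X 7) (-X 1) (by simp only [Uv, Lv]; ring)

lemma cert_minor (c c' : Fin 4) (hlt : c < c') :
    (X (Uv c) * X (Lv c') - X (Lv c) * X (Uv c')) * (X 3 * X 4) ∈ II := by
  fin_cases c <;> fin_cases c'
  · exact absurd hlt (by decide)
  · exact memI (-(X 3 * X 4)) 0 0 (by simp only [Uv, Lv]; ring)
  · exact memI (-(X 5 * X 4)) (-(X 0 * X 4)) 0 (by simp only [Uv, Lv]; ring)
  · exact memI (-(X 5 * X 7)) (-(X 0 * X 7)) (-(X 3 * X 2)) (by simp only [Uv, Lv]; ring)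
  · exact absurd hlt (by decide)
  · exact absurd hlt (by decide)
  · exact memI 0 (-(X 3 * X 4)) 0 (by simp only [Uv, Lv]; ring)
  · exact memI 0 (-(X 3 * X 7)) (-(X 3 * X 1)) (by simp only [Uv, Lv]; ring)
  · exact absurd hlt (by decide)
  · exact absurd hlt (by decide)
  · exact absurd hlt (by decide)
  · exact memI 0 0 (-(X 3 * X 4)) (by simp only [Uv, Lv]; ring)
  · exact absurd hlt (by decide)
  · exact absurd hlt (by decide)
  · exact absurd hlt (by decide)
  · exact absurd hlt (by decide)

-- chunk 4 : division lemmas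
lemma reassemble {n : Fin 8 →₀ ℕ} {i : Fin 8} (hi : n i ≠ 0) : (n - e8 i) + e8 i = n := by
  ext k
  rw [Finsupp.add_apply, Finsupp.tsub_apply]
  rcases eq_or_ne i k with h | h
  · subst h; rw [Finsupp.single_eq_same]; omega
  · rw [Finsupp.single_eq_of_ne' h]; omega

lemma XmulMono (j : Fin 6) (d : Fin 6 →₀ ℕ) (q : ℚ) :
    (X j : T) * monomial d q = monomial (Finsupp.single j 1 + d) q := by
  rw [show (X j : T) = monomial (Finsupp.single j 1) 1 from rfl, monomial_mul, one_mul]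

lemma div_t : ∀ x : R, (∀ n ∈ x.support, ∃ c : Fin 4, n (Uv c) ≠ 0) →
    ∃ y : R, x * (X 3 * X 5) - y * (X 3 * X 4) ∈ II ∧ (X 1 : T) * Φ y = (X 0 : T) * Φ x := by
  intro x
  induction x using MvPolynomial.monomial_add_induction_on with
  | C a =>
    intro h
    rcases eq_or_ne a 0 with ha | ha
    · exact ⟨0, by simp [ha], by simp [ha]⟩
    · obtain ⟨c, hc⟩ := h 0 (by rw [mem_support_iff]; simpa using ha)
      simp at hc
  | monomial_add n b f hnf hb ih =>
    intro h
    have hco : ∀ m, coeff m ((monomial n b : R) + (show R from f))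
        = (if n = m then b else 0) + coeff m (show R from f) := by
      intro m; rw [coeff_add, coeff_monomial]
    have hmemn : n ∈ ((monomial n b : R) + (show R from f)).support := by
      rw [mem_support_iff, hco, if_pos rfl, notMem_support_iff.mp hnf, add_zero]
      exact hb
    have hsub : ∀ m ∈ (show R from f).support,
        m ∈ ((monomial n b : R) + (show R from f)).support := by
      intro m hm
      have hmn : n ≠ m := fun hh => hnf (hh ▸ hm)
      rw [mem_support_iff, hco, if_neg hmn, zero_add]
      exact mem_support_iff.mp hm
    obtain ⟨y₂, hy₂I, hy₂Φ⟩ := ih (fun m hm => h m (hsub m hm))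
    obtain ⟨c, hc⟩ := h n hmemn
    show ∃ y : R, ((monomial n b : R) + (show R from f)) * (X 3 * X 5) - y * (X 3 * X 4) ∈ II ∧
      (X 1 : T) * Φ y = (X 0 : T) * Φ ((monomial n b : R) + (show R from f))
    have hre : (n - e8 (Uv c)) + e8 (Uv c) = n := reassemble hc
    have hmon : (monomial n b : R) = monomial (n - e8 (Uv c)) b * X (Uv c) := by
      rw [Xe, monomial_mul, mul_one, hre]
    have hy₁m : (monomial ((n - e8 (Uv c)) + e8 (Lv c)) b : R)
        = monomial (n - e8 (Uv c)) b * X (Lv c) := by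
      rw [Xe, monomial_mul, mul_one]
    refine ⟨monomial ((n - e8 (Uv c)) + e8 (Lv c)) b + y₂, ?_, ?_⟩
    · have hrw : ((monomial n b : R) + (show R from f)) * (X 3 * X 5)
          - ((monomial ((n - e8 (Uv c)) + e8 (Lv c)) b : R) + y₂) * (X 3 * X 4)
          = monomial (n - e8 (Uv c)) b * (X (Uv c) * (X 3 * X 5) - X (Lv c) * (X 3 * X 4))
            + ((show R from f) * (X 3 * X 5) - y₂ * (X 3 * X 4)) := by
        rw [hmon, hy₁m]; ring
      rw [hrw]
      exact Ideal.add_mem _ (Ideal.mul_mem_left _ _ (cert_t c)) hy₂I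
    · rw [map_add, map_add, mul_add, mul_add, hy₂Φ, Φ_monomial, Φ_monomial,
        XmulMono, XmulMono]
      have hexp : Finsupp.single (1 : Fin 6) 1 + hatΦ ((n - e8 (Uv c)) + e8 (Lv c))
          = Finsupp.single (0 : Fin 6) 1 + hatΦ n := by
        fin_cases c <;>
          · apply Finsupp.ext
            intro j
            simp only [Uv, Lv] at hc ⊢
            fin_cases j <;>
              simp [hatΦ_apply, hatf, Finsupp.add_apply, Finsupp.tsub_apply,
                Finsupp.single_apply, Finsupp.sub_apply] <;> omega
      rw [hexp]
    
lemma div_s : ∀ x : R, (∀ n ∈ x.support, ∃ c : Fin 4, n (Lv c) ≠ 0) →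
    ∃ y : R, x * (X 1 * X 4) - y * (X 3 * X 4) ∈ II ∧ (X 0 : T) * Φ y = (X 1 : T) * Φ x := by
  intro x
  induction x using MvPolynomial.monomial_add_induction_on with
  | C a =>
    intro h
    rcases eq_or_ne a 0 with ha | ha
    · exact ⟨0, by simp [ha], by simp [ha]⟩
    · obtain ⟨c, hc⟩ := h 0 (by rw [mem_support_iff]; simpa using ha)
      simp at hc
  | monomial_add n b f hnf hb ih =>
    intro h
    have hco : ∀ m, coeff m ((monomial n b : R) + (show R from f))
        = (if n = m then b else 0) + coeff m (show R from f) := by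
      intro m; rw [coeff_add, coeff_monomial]
    have hmemn : n ∈ ((monomial n b : R) + (show R from f)).support := by
      rw [mem_support_iff, hco, if_pos rfl, notMem_support_iff.mp hnf, add_zero]
      exact hb
    have hsub : ∀ m ∈ (show R from f).support,
        m ∈ ((monomial n b : R) + (show R from f)).support := by
      intro m hm
      have hmn : n ≠ m := fun hh => hnf (hh ▸ hm)
      rw [mem_support_iff, hco, if_neg hmn, zero_add]
      exact mem_support_iff.mp hm
    obtain ⟨y₂, hy₂I, hy₂Φ⟩ := ih (fun m hm => h m (hsub m hm))
    obtain ⟨c, hc⟩ := h n hmemn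
    show ∃ y : R, ((monomial n b : R) + (show R from f)) * (X 1 * X 4) - y * (X 3 * X 4) ∈ II ∧
      (X 0 : T) * Φ y = (X 1 : T) * Φ ((monomial n b : R) + (show R from f))
    have hre : (n - e8 (Lv c)) + e8 (Lv c) = n := reassemble hc
    have hmon : (monomial n b : R) = monomial (n - e8 (Lv c)) b * X (Lv c) := by
      rw [Xe, monomial_mul, mul_one, hre]
    have hy₁m : (monomial ((n - e8 (Lv c)) + e8 (Uv c)) b : R)
        = monomial (n - e8 (Lv c)) b * X (Uv c) := by
      rw [Xe, monomial_mul, mul_one]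
    refine ⟨monomial ((n - e8 (Lv c)) + e8 (Uv c)) b + y₂, ?_, ?_⟩
    · have hrw : ((monomial n b : R) + (show R from f)) * (X 1 * X 4)
          - ((monomial ((n - e8 (Lv c)) + e8 (Uv c)) b : R) + y₂) * (X 3 * X 4)
          = monomial (n - e8 (Lv c)) b * (X (Lv c) * (X 1 * X 4) - X (Uv c) * (X 3 * X 4))
            + ((show R from f) * (X 1 * X 4) - y₂ * (X 3 * X 4)) := by
        rw [hmon, hy₁m]; ring
      rw [hrw]
      exact Ideal.add_mem _ (Ideal.mul_mem_left _ _ (cert_s c)) hy₂I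
    · rw [map_add, map_add, mul_add, mul_add, hy₂Φ, Φ_monomial, Φ_monomial,
        XmulMono, XmulMono]
      have hexp : Finsupp.single (0 : Fin 6) 1 + hatΦ ((n - e8 (Lv c)) + e8 (Uv c))
          = Finsupp.single (1 : Fin 6) 1 + hatΦ n := by
        fin_cases c <;>
          · apply Finsupp.ext
            intro j
            simp only [Uv, Lv] at hc ⊢
            fin_cases j <;>
              simp [hatΦ_apply, hatf, Finsupp.add_apply, Finsupp.tsub_apply,
                Finsupp.single_apply, Finsupp.sub_apply] <;> omega
      rw [hexp]

-- chunk 5 : sorting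
def mu (n : Fin 8 →₀ ℕ) : ℕ := n 3 + 2 * n 5 + 3 * n 6

lemma mu_add (a b : Fin 8 →₀ ℕ) : mu (a + b) = mu a + mu b := by
  simp only [mu, Finsupp.add_apply]; ring

lemma mu_eU (c : Fin 4) : mu (e8 (Uv c)) = 0 := by
  fin_cases c <;> simp [mu, Uv, Finsupp.single_apply]

lemma mu_eL (c : Fin 4) : mu (e8 (Lv c)) = (c : ℕ) := by
  fin_cases c <;> simp [mu, Lv, Finsupp.single_apply]

def MM (x : R) : ℕ := ∑ n ∈ x.support, mu n

lemma support_sub_coeff (x : R) (n₀ : Fin 8 →₀ ℕ) :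
    (x - monomial n₀ (coeff n₀ x)).support = x.support.erase n₀ := by
  ext m
  rcases eq_or_ne m n₀ with h | h
  · subst h
    simp [mem_support_iff, coeff_sub, coeff_monomial]
  · simp [mem_support_iff, coeff_sub, coeff_monomial, Finset.mem_erase, h, Ne.symm h]

lemma reassemble2 {n : Fin 8 →₀ ℕ} {i j : Fin 8} (hij : i ≠ j) (hi : n i ≠ 0) (hj : n j ≠ 0) :
    ((n - e8 i - e8 j) + e8 i) + e8 j = n := by
  ext k
  rw [Finsupp.add_apply, Finsupp.add_apply, Finsupp.tsub_apply, Finsupp.tsub_apply]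
  rcases eq_or_ne i k with h1 | h1
  · subst h1
    rw [Finsupp.single_eq_same, Finsupp.single_eq_of_ne' (Ne.symm hij)]
    omega
  · rcases eq_or_ne j k with h2 | h2
    · subst h2
      rw [Finsupp.single_eq_same, Finsupp.single_eq_of_ne' h1]
      omega
    · rw [Finsupp.single_eq_of_ne' h1, Finsupp.single_eq_of_ne' h2]
      omega

lemma sort : ∀ N : ℕ, ∀ x : R, MM x ≤ N → Φ x = 0 → x * (X 3 * X 4) ∈ II := by
  intro N
  induction N using Nat.strong_induction_on with
  | _ N ih =>
  intro x hMx hΦx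
  by_cases hcan : ∀ n ∈ x.support, Canon n
  · rw [zero_of_canon hcan hΦx, zero_mul]
    exact Ideal.zero_mem II
  · push_neg at hcan
    obtain ⟨n₀, hn₀, hnc⟩ := hcan
    rw [Canon] at hnc
    push_neg at hnc
    obtain ⟨c, c', hlt, hU, hL⟩ := hnc
    have hUL : Uv c ≠ Lv c' := by fin_cases c <;> fin_cases c' <;> decide
    have hq0 : coeff n₀ x ≠ 0 := mem_support_iff.mp hn₀
    have hb1 : (((n₀ - e8 (Uv c) - e8 (Lv c')) + e8 (Uv c)) + e8 (Lv c')) = n₀ :=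
      reassemble2 hUL hU hL
    set q := coeff n₀ x with hqdef
    set base := n₀ - e8 (Uv c) - e8 (Lv c') with hbasedef
    set n₁ := (base + e8 (Lv c)) + e8 (Uv c') with hn₁def
    have h1 : (monomial base q : R) * (X (Uv c) * X (Lv c')) = monomial n₀ q := by
      rw [XmulX, monomial_mul, mul_one, ← add_assoc, hb1]
    have h2 : (monomial base q : R) * (X (Lv c) * X (Uv c')) = monomial n₁ q := by
      rw [XmulX, monomial_mul, mul_one, ← add_assoc]
    have hδeq : (monomial n₀ q : R) - monomial n₁ q
        = monomial base q * (X (Uv c) * X (Lv c') - X (Lv c) * X (Uv c')) := by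
      rw [mul_sub, h1, h2]
    have hΦδ : Φ ((monomial base q : R) * (X (Uv c) * X (Lv c') - X (Lv c) * X (Uv c'))) = 0 := by
      rw [map_mul, map_sub, map_mul, map_mul, Φ_X, Φ_X, Φ_X, Φ_X,
        monomial_mul, monomial_mul, eT_U c, eT_L c', eT_L c, eT_U c',
        show (Finsupp.single (1:Fin 6) 1 + Finsupp.single (colv c) 1)
            + (Finsupp.single (0:Fin 6) 1 + Finsupp.single (colv c') 1)
          = (Finsupp.single (0:Fin 6) 1 + Finsupp.single (colv c) 1)
            + (Finsupp.single (1:Fin 6) 1 + Finsupp.single (colv c') 1) by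
          rw [add_add_add_comm, add_add_add_comm (Finsupp.single 0 1)]
          rw [add_comm (Finsupp.single (1:Fin 6) 1) (Finsupp.single (0:Fin 6) 1)]]
      rw [sub_self, mul_zero]
    set x₂ := x - monomial n₀ q with hx₂def
    have hx'eq : x - monomial base q * (X (Uv c) * X (Lv c') - X (Lv c) * X (Uv c'))
        = x₂ + monomial n₁ q := by
      rw [← hδeq, hx₂def]; ring
    have hΦx' : Φ (x₂ + monomial n₁ q) = 0 := by
      rw [← hx'eq, map_sub, hΦx, hΦδ, sub_zero]
    -- measure
    have hsup₂ : x₂.support = x.support.erase n₀ := support_sub_coeff x n₀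
    have hMM2 : mu n₀ + MM x₂ = MM x := by
      rw [MM, MM, hsup₂]
      exact Finset.add_sum_erase _ _ hn₀
    have hsub' : (x₂ + monomial n₁ q).support ⊆ insert n₁ x₂.support := by
      intro m hm
      rcases Finset.mem_union.mp (support_add hm) with hm1 | hm2
      · exact Finset.mem_insert_of_mem hm1
      · classical
        rw [support_monomial] at hm2
        rcases Finset.mem_singleton.mp (by simpa [hq0] using hm2) with rfl
        exact Finset.mem_insert_self _ _
    have hMM' : MM (x₂ + monomial n₁ q) ≤ mu n₁ + MM x₂ := by
      calc MM (x₂ + monomial n₁ q) ≤ ∑ n ∈ insert n₁ x₂.support, mu n :=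
            Finset.sum_le_sum_of_subset hsub'
        _ ≤ mu n₁ + MM x₂ := by
            by_cases hmem : n₁ ∈ x₂.support
            · rw [Finset.insert_eq_self.mpr hmem]
              exact Nat.le_add_left _ _
            · rw [Finset.sum_insert hmem]
              exact le_rfl
    have hmun : mu n₁ < mu n₀ := by
      have e0 : mu n₀ = mu base + ((c' : ℕ)) := by
        rw [← hb1, mu_add, mu_add, mu_eU, mu_eL]; omega
      have e1 : mu n₁ = mu base + (c : ℕ) := by
        rw [hn₁def, mu_add, mu_add, mu_eL, mu_eU]; omega
      have : (c : ℕ) < (c' : ℕ) := hlt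
      omega
    have hlt' : MM (x₂ + monomial n₁ q) < N := by omega
    have hrec := ih _ hlt' (x₂ + monomial n₁ q) le_rfl hΦx'
    have hx : x = (x₂ + monomial n₁ q)
        + monomial base q * (X (Uv c) * X (Lv c') - X (Lv c) * X (Uv c')) := by
      rw [← hx'eq]; ring
    rw [hx, add_mul]
    refine Ideal.add_mem _ hrec ?_
    rw [mul_assoc]
    exact Ideal.mul_mem_left _ _ (cert_minor c c' hlt)

-- chunk 6 : assembly
lemma XmulXT (a b : Fin 6) : (X a : T) * X b = monomial (Finsupp.single a 1 + Finsupp.single b 1) 1 := by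
  rw [show (X a : T) = monomial (Finsupp.single a 1) 1 from rfl,
    show (X b : T) = monomial (Finsupp.single b 1) 1 from rfl, monomial_mul, one_mul]

lemma Φ_X' (i : Fin 8) : Φ (X i) = X (rowIdx i) * X (colIdx i) := by
  rw [Φ_X, XmulXT, eT]

lemma mem_span_triple {a b c p : R} :
    p ∈ Ideal.span {a, b, c} ↔ ∃ A B C', p = A * a + B * b + C' * c := by
  constructor
  · intro hp
    obtain ⟨A, z, hz, rfl⟩ := Submodule.mem_span_insert.mp hp
    obtain ⟨B, C', hz'⟩ := Ideal.mem_span_pair.mp hz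
    exact ⟨A, B, C', by rw [← hz', smul_eq_mul]; ring⟩
  · rintro ⟨A, B, C', rfl⟩
    refine Ideal.add_mem _ (Ideal.add_mem _ ?_ ?_) ?_ <;>
      exact Ideal.mul_mem_left _ _ (Ideal.subset_span (by simp))

lemma mem_span_quad {a b c d p : R} :
    p ∈ Ideal.span {a, b, c, d} ↔ ∃ A B C' D, p = A * a + B * b + C' * c + D * d := by
  constructor
  · intro hp
    obtain ⟨A, z, hz, rfl⟩ := Submodule.mem_span_insert.mp hp
    obtain ⟨B, C', D, hz'⟩ := mem_span_triple.mp hz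
    exact ⟨A, B, C', D, by rw [hz', smul_eq_mul]; ring⟩
  · rintro ⟨A, B, C', D, rfl⟩
    refine Ideal.add_mem _ (Ideal.add_mem _ (Ideal.add_mem _ ?_ ?_) ?_) ?_ <;>
      exact Ideal.mul_mem_left _ _ (Ideal.subset_span (by simp))

lemma pair_le {i j : Fin 8} (hij : i ≠ j) {n : Fin 8 →₀ ℕ} (hi : n i ≠ 0) (hj : n j ≠ 0) :
    e8 i + e8 j ≤ n := by
  rw [Finsupp.le_def]
  intro s
  rw [Finsupp.add_apply]
  rcases eq_or_ne i s with h1 | h1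
  · subst h1
    rw [Finsupp.single_eq_same, Finsupp.single_eq_of_ne' (Ne.symm hij)]
    omega
  · rcases eq_or_ne j s with h2 | h2
    · subst h2
      rw [Finsupp.single_eq_same, Finsupp.single_eq_of_ne' h1]
      omega
    · rw [Finsupp.single_eq_of_ne' h1, Finsupp.single_eq_of_ne' h2]
      omega

lemma inter_lemma {w : R} (h1 : w ∈ Ideal.span {(X 3 : R), X 1})
    (h2 : w ∈ Ideal.span {(X 5 : R), X 4}) :
    w ∈ Ideal.span {(X 3 : R) * X 5, X 3 * X 4, X 1 * X 5, X 1 * X 4} := by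
  have h1' : w ∈ Ideal.span (X '' ({3, 1} : Set (Fin 8)) : Set R) := by
    rwa [Set.image_insert_eq, Set.image_singleton]
  have h2' : w ∈ Ideal.span (X '' ({5, 4} : Set (Fin 8)) : Set R) := by
    rwa [Set.image_insert_eq, Set.image_singleton]
  have c1 := mem_ideal_span_X_image.mp h1'
  have c2 := mem_ideal_span_X_image.mp h2'
  have htarget : Ideal.span {(X 3 : R) * X 5, X 3 * X 4, X 1 * X 5, X 1 * X 4}
      = Ideal.span ((fun s => monomial s (1 : ℚ)) ''
        ({e8 3 + e8 5, e8 3 + e8 4, e8 1 + e8 5, e8 1 + e8 4} : Set (Fin 8 →₀ ℕ))) := by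
    rw [Set.image_insert_eq, Set.image_insert_eq, Set.image_insert_eq, Set.image_singleton]
    rw [XmulX, XmulX, XmulX, XmulX]
  rw [htarget]
  rw [mem_ideal_span_monomial_image]
  intro n hn
  obtain ⟨i, hi, hin⟩ := c1 n hn
  obtain ⟨j, hj, hjn⟩ := c2 n hn
  have hij : i ≠ j := by
    rcases hi with rfl | hi <;> rcases hj with rfl | hj <;> simp_all <;> omega
  rcases hi with rfl | hi <;> rcases hj with rfl | hj
  · exact ⟨e8 3 + e8 5, by simp, pair_le hij hin hjn⟩
  · rw [Set.mem_singleton_iff] at hj; subst hj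
    exact ⟨e8 3 + e8 4, by simp, pair_le hij hin hjn⟩
  · rw [Set.mem_singleton_iff] at hi; subst hi
    exact ⟨e8 1 + e8 5, by simp, pair_le hij hin hjn⟩
  · rw [Set.mem_singleton_iff] at hi; rw [Set.mem_singleton_iff] at hj; subst hi; subst hj
    exact ⟨e8 1 + e8 4, by simp, pair_le hij hin hjn⟩

lemma coeff_X_mul_zero {i : Fin 6} {G : T} {d : Fin 6 →₀ ℕ} (h : d i = 0) :
    coeff d (X i * G) = 0 := by
  classical
  rw [coeff_X_mul']
  rw [if_neg]
  rw [Finsupp.mem_support_iff]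
  simp [h]

lemma I_eq_II : I = II := rfl

lemma Q1_ker {z : R} (hz : z ∈ Q1) : Φ z = 0 := by
  have hle : Q1 ≤ RingHom.ker (Φ.toRingHom : R →+* T) := by
    rw [Q1, Ideal.span_le]
    intro g hg
    simp only [Set.mem_insert_iff, Set.mem_singleton_iff] at hg
    rcases hg with rfl | rfl | rfl | rfl | rfl | rfl <;>
      · rw [SetLike.mem_coe, RingHom.mem_ker]
        show Φ _ = 0
        simp only [x11, x22, x21, x12, x23, x13, x14, x24, map_sub, map_mul, Φ_X']
        simp only [rowIdx, colIdx]
        ring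
  have := hle hz
  rwa [RingHom.mem_ker] at this

end PD

open PD in
theorem primary_decomposition : I = Q1 ⊓ Q2 ⊓ Q3 := by
  apply le_antisymm
  · refine le_inf (le_inf ?_ ?_) ?_
    · rw [I, Ideal.span_le]
      intro g hg
      simp only [Set.mem_insert_iff, Set.mem_singleton_iff] at hg
      rcases hg with rfl | rfl | rfl
      · exact Ideal.subset_span (by simp [Q1])
      · exact Ideal.subset_span (by simp [Q1])
      · rw [show x13 * x24 - x23 * x14 = -(x23 * x14 - x13 * x24) by ring]
        exact neg_mem (Ideal.subset_span (by simp [Q1]))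
    · rw [I, Ideal.span_le]
      intro g hg
      simp only [Set.mem_insert_iff, Set.mem_singleton_iff] at hg
      rcases hg with rfl | rfl | rfl
      · exact Ideal.subset_span (by simp [Q2])
      · exact mem_span_triple.mpr ⟨-x22, x12, 0, by ring⟩
      · exact mem_span_triple.mpr ⟨x24, -x14, 0, by ring⟩
    · rw [I, Ideal.span_le]
      intro g hg
      simp only [Set.mem_insert_iff, Set.mem_singleton_iff] at hg
      rcases hg with rfl | rfl | rfl
      · exact mem_span_triple.mpr ⟨-x21, x11, 0, by ring⟩
      · exact mem_span_triple.mpr ⟨x23, -x13, 0, by ring⟩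
      · exact mem_span_triple.mpr ⟨0, 0, -1, by ring⟩
  · intro p hp
    have hp1 : p ∈ Q1 := hp.1.1
    have hp2 : p ∈ Ideal.span {x13, x23, x11 * x22 - x21 * x12} := hp.1.2
    have hp3 : p ∈ Ideal.span {x12, x22, x23 * x14 - x13 * x24} := hp.2
    obtain ⟨lam, mu', nu, hrep2⟩ := mem_span_triple.mp hp2
    have h1 : lam * x13 + mu' * x23 ∈ Ideal.span {x12, x22, x23 * x14 - x13 * x24} := by
      have heq : lam * x13 + mu' * x23 = p - nu * (x11 * x22 - x21 * x12) := by
        rw [hrep2]; ring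
      rw [heq]
      exact Submodule.sub_mem _ hp3
        (Ideal.mul_mem_left _ nu (mem_span_triple.mpr ⟨-x21, x11, 0, by ring⟩))
    obtain ⟨bet, phi, z, hrep3⟩ := mem_span_triple.mp h1
    set w : R := lam * x13 + mu' * x23 - z * (x23 * x14 - x13 * x24) with hw
    have hwbf : w ∈ Ideal.span {(X 3 : R), X 1} := by
      refine Ideal.mem_span_pair.mpr ⟨bet, phi, ?_⟩
      rw [hw, hrep3]
      show bet * x12 + phi * x22 = _
      ring
    have hwcg : w ∈ Ideal.span {(X 5 : R), X 4} := by
      refine Ideal.mem_span_pair.mpr ⟨lam + z * x24, mu' - z * x14, ?_⟩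
      rw [hw]
      show (lam + z * x24) * x13 + (mu' - z * x14) * x23 = _
      simp only [x13, x23, x14, x24]
      ring
    obtain ⟨r1, r2, r3, r4, hrepM⟩ := mem_span_quad.mp (inter_lemma hwbf hwcg)
    have hwQ1 : w ∈ Q1 := by
      have heq : w = p - nu * (x11 * x22 - x21 * x12) - z * (x23 * x14 - x13 * x24) := by
        rw [hw, hrep2]; ring
      rw [heq]
      refine Submodule.sub_mem _ (Submodule.sub_mem _ hp1 ?_) ?_
      · exact Ideal.mul_mem_left _ _ (Ideal.subset_span (by simp [Q1]))
      · exact Ideal.mul_mem_left _ _ (Ideal.subset_span (by simp [Q1]))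
    have hΦw : Φ w = 0 := Q1_ker hwQ1
    have hfac : Φ w = (X 3 * X 4) * (X 0 * (X 0 * Φ r1) + X 1 * (X 0 * (Φ r2 + Φ r3))
        + X 1 * (X 1 * Φ r4)) := by
      rw [hrepM]
      simp only [map_add, map_mul, Φ_X']
      simp only [rowIdx, colIdx]
      ring
    have h34 : (X 3 * X 4 : T) ≠ 0 := mul_ne_zero (X_ne_zero _) (X_ne_zero _)
    have hE0 : X 0 * (X 0 * Φ r1) + X 1 * (X 0 * (Φ r2 + Φ r3)) + X 1 * (X 1 * Φ r4) = 0 := by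
      have h0 : (X 3 * X 4) * (X 0 * (X 0 * Φ r1) + X 1 * (X 0 * (Φ r2 + Φ r3))
          + X 1 * (X 1 * Φ r4)) = 0 := by rw [← hfac, hΦw]
      exact (mul_eq_zero.mp h0).resolve_left h34
    have hE0' : X 0 * (X 0 * Φ r1) = -(X 1 * (X 0 * (Φ r2 + Φ r3)) + X 1 * (X 1 * Φ r4)) := by
      linear_combination hE0
    have hE0'' : X 1 * (X 1 * Φ r4) = -(X 0 * (X 0 * Φ r1) + X 0 * (X 1 * (Φ r2 + Φ r3))) := by
      linear_combination hE0
    have hr1supp : ∀ n ∈ r1.support, ∃ c : Fin 4, n (Uv c) ≠ 0 := by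
      apply supp_row2
      intro d hd
      by_contra h'
      have hd1 : d 1 = 0 := h'
      have hco := congrArg (coeff (Finsupp.single 0 1 + (Finsupp.single 0 1 + d))) hE0'
      rw [coeff_X_mul, coeff_X_mul, coeff_neg, coeff_add,
        coeff_X_mul_zero (by simp [Finsupp.add_apply, Finsupp.single_apply, hd1]),
        coeff_X_mul_zero (by simp [Finsupp.add_apply, Finsupp.single_apply, hd1])] at hco
      simp only [add_zero, neg_zero] at hco
      exact mem_support_iff.mp hd hco
    have hr4supp : ∀ n ∈ r4.support, ∃ c : Fin 4, n (Lv c) ≠ 0 := by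
      apply supp_row1
      intro d hd
      by_contra h'
      have hd0 : d 0 = 0 := h'
      have hco := congrArg (coeff (Finsupp.single 1 1 + (Finsupp.single 1 1 + d))) hE0''
      rw [coeff_X_mul, coeff_X_mul, coeff_neg, coeff_add,
        coeff_X_mul_zero (by simp [Finsupp.add_apply, Finsupp.single_apply, hd0]),
        coeff_X_mul_zero (by simp [Finsupp.add_apply, Finsupp.single_apply, hd0])] at hco
      simp only [add_zero, neg_zero] at hco
      exact mem_support_iff.mp hd hco
    obtain ⟨y1, hy1I, hy1Φ⟩ := div_t r1 hr1supp
    obtain ⟨y4, hy4I, hy4Φ⟩ := div_s r4 hr4supp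
    have hΦG : Φ (y1 + (r2 + r3) + y4) = 0 := by
      have hG : (X 0 * X 1) * Φ (y1 + (r2 + r3) + y4) = 0 := by
        rw [map_add, map_add, map_add]
        linear_combination (X 0 : T) * hy1Φ + (X 1 : T) * hy4Φ + hE0
      exact (mul_eq_zero.mp hG).resolve_left (mul_ne_zero (X_ne_zero _) (X_ne_zero _))
    have hGbg : (y1 + (r2 + r3) + y4) * (X 3 * X 4) ∈ II :=
      sort (MM (y1 + (r2 + r3) + y4)) _ le_rfl hΦG
    have hwII : w ∈ II := by
      have hwsplit : w = (r1 * (X 3 * X 5) - y1 * (X 3 * X 4))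
          + (r4 * (X 1 * X 4) - y4 * (X 3 * X 4))
          + (-r3) * (X 3 * X 4 - X 1 * X 5)
          + (y1 + (r2 + r3) + y4) * (X 3 * X 4) := by
        rw [hrepM]; ring
      rw [hwsplit]
      refine Ideal.add_mem _ (Ideal.add_mem _ (Ideal.add_mem _ hy1I hy4I) ?_) hGbg
      exact Ideal.mul_mem_left _ _ (Ideal.subset_span (by simp [II]))
    have hpfin : p = nu * (x11 * x22 - x21 * x12) + (-z) * (x13 * x24 - x23 * x14) + w := by
      rw [hw, hrep2]; ring
    rw [I_eq_II, hpfin]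
    refine Ideal.add_mem _ (Ideal.add_mem _ ?_ ?_) hwII
    · exact Ideal.mul_mem_left _ _ (Ideal.subset_span (by simp [II, x11, x22, x21, x12]))
    · exact Ideal.mul_mem_left _ _ (Ideal.subset_span (by simp [II, x13, x24, x23, x14]))

end
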